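/- Let x ∈ H², y ∈ S²₁ and r > 0. Then the set {z ∈ H² : B(z,x) = −cosh r and B(z,y) = 0} has exactly one element if and only if B(x,y)² = sinh² r. (Geometrically: the geodesic line represented by y is tangent to the circle of radius r centered at x if and only if the distance from x to the line is r, i.e. |B(x,y)| = sinh r.) -/

import Mathlib

/-- The Lorentz bilinear form on ℝ³: B(x,y) = −x⁰y⁰ + x¹y¹ + x²y². -/
noncomputable def lorentzB (x y : Fin 3 → ℝ) : ℝ :=
  -(x 0 * y 0) + x 1 * y 1 + x 2 * y 2

/-- The hyperboloid model H² = {x : B(x,x) = −1, x⁰ > 0}. -/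
def hyperboloid : Set (Fin 3 → ℝ) :=
  {x | lorentzB x x = -1 ∧ 0 < x 0}

/-- The de Sitter sphere S²₁ = {x : B(x,x) = 1}. -/
def deSitter : Set (Fin 3 → ℝ) :=
  {x | lorentzB x x = 1}

/-- Lorentz cross product J(x × y). -/
noncomputable def lw (x y : Fin 3 → ℝ) : Fin 3 → ℝ :=
  ![-(x 1 * y 2 - x 2 * y 1), x 2 * y 0 - x 0 * y 2, x 0 * y 1 - x 1 * y 0]

lemma lB_symm (x y : Fin 3 → ℝ) : lorentzB x y = lorentzB y x := by
  simp [lorentzB]; ring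

lemma lB_wx (x y : Fin 3 → ℝ) : lorentzB (lw x y) x = 0 := by
  simp [lorentzB, lw]; ring

lemma lB_wy (x y : Fin 3 → ℝ) : lorentzB (lw x y) y = 0 := by
  simp [lorentzB, lw]; ring

lemma lB_ww (x y : Fin 3 → ℝ) :
    lorentzB (lw x y) (lw x y) = lorentzB x y ^ 2 - lorentzB x x * lorentzB y y := by
  simp [lorentzB, lw]; ring

/-- det(x,y,z)² = − det Gram(x,y,z). -/
lemma det_sq (x y z : Fin 3 → ℝ) :
    (z 0 * (x 1 * y 2 - x 2 * y 1) - z 1 * (x 0 * y 2 - x 2 * y 0)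
      + z 2 * (x 0 * y 1 - x 1 * y 0)) ^ 2 =
    -(lorentzB x x * (lorentzB y y * lorentzB z z - lorentzB y z ^ 2)
      - lorentzB x y * (lorentzB x y * lorentzB z z - lorentzB x z * lorentzB y z)
      + lorentzB x z * (lorentzB x y * lorentzB y z - lorentzB x z * lorentzB y y)) := by
  simp [lorentzB]; ring

lemma lB_expand (α β γ : ℝ) (x y w t : Fin 3 → ℝ) :
    lorentzB (fun i => α * x i + β * y i + γ * w i) t
      = α * lorentzB x t + β * lorentzB y t + γ * lorentzB w t := by
  simp [lorentzB]; ring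

lemma lB_expand' (α β γ : ℝ) (x y w t : Fin 3 → ℝ) :
    lorentzB t (fun i => α * x i + β * y i + γ * w i)
      = α * lorentzB t x + β * lorentzB t y + γ * lorentzB t w := by
  simp [lorentzB]; ring

lemma lB_sub (z z' t : Fin 3 → ℝ) :
    lorentzB (fun i => z i - z' i) t = lorentzB z t - lorentzB z' t := by
  simp [lorentzB]; ring

lemma upper (x z : Fin 3 → ℝ) (hxx : lorentzB x x = -1) (hx0 : 0 < x 0)
    (hzz : lorentzB z z = -1) (h : lorentzB z x < 0) : 0 < z 0 := by
  simp only [lorentzB] at hxx hzz h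
  by_contra hz0
  push_neg at hz0
  have h1 : z 0 ≤ -1 := by nlinarith [sq_nonneg (z 1), sq_nonneg (z 2)]
  have hv : z 0 * x 0 < 0 := by nlinarith
  have hu : z 1 * x 1 + z 2 * x 2 < z 0 * x 0 := by linarith
  have hsq : (z 1 * x 1 + z 2 * x 2) ^ 2 > (z 0 * x 0) ^ 2 := by nlinarith
  nlinarith [sq_nonneg (z 1 * x 2 - z 2 * x 1)]

/-- Candidate tangency/intersection point. -/
noncomputable def zsol (x y : Fin 3 → ℝ) (c g : ℝ) : Fin 3 → ℝ :=
  fun i => (c / (1 + lorentzB x y ^ 2)) * x i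
    + (-(c * lorentzB x y) / (1 + lorentzB x y ^ 2)) * y i
    + (g / (1 + lorentzB x y ^ 2)) * lw x y i

lemma zsol_eval (x y : Fin 3 → ℝ) (c g : ℝ) (t : Fin 3 → ℝ) :
    lorentzB (zsol x y c g) t
      = (c / (1 + lorentzB x y ^ 2)) * lorentzB x t
        + (-(c * lorentzB x y) / (1 + lorentzB x y ^ 2)) * lorentzB y t
        + (g / (1 + lorentzB x y ^ 2)) * lorentzB (lw x y) t := by
  unfold zsol
  exact lB_expand _ _ _ x y (lw x y) t

lemma zsol_props (x y : Fin 3 → ℝ) (hxx : lorentzB x x = -1) (hx0 : 0 < x 0)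
    (hyy : lorentzB y y = 1) (c s g : ℝ) (hc : c ^ 2 = 1 + s ^ 2) (hc1 : 1 ≤ c)
    (hg : g ^ 2 = s ^ 2 - lorentzB x y ^ 2) :
    zsol x y c g ∈ hyperboloid ∧ lorentzB (zsol x y c g) x = -c ∧
      lorentzB (zsol x y c g) y = 0 := by
  have hk : (0:ℝ) < 1 + lorentzB x y ^ 2 := by positivity
  have hk' : (1 + lorentzB x y ^ 2) ≠ 0 := ne_of_gt hk
  have hxw : lorentzB x (lw x y) = 0 := by rw [lB_symm]; exact lB_wx x y
  have hyw : lorentzB y (lw x y) = 0 := by rw [lB_symm]; exact lB_wy x y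
  have hww : lorentzB (lw x y) (lw x y) = lorentzB x y ^ 2 + 1 := by
    rw [lB_ww, hxx, hyy]; ring
  have hzx : lorentzB (zsol x y c g) x = -c := by
    rw [zsol_eval, hxx, lB_symm y x, lB_wx]
    field_simp; ring
  have hzy : lorentzB (zsol x y c g) y = 0 := by
    rw [zsol_eval, lB_symm x y, hyy, lB_wy]
    field_simp
    ring
  have hzz : lorentzB (zsol x y c g) (zsol x y c g) = -1 := by
    rw [zsol_eval]
    unfold zsol
    rw [lB_expand' _ _ _ x y (lw x y) x, lB_expand' _ _ _ x y (lw x y) y,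
      lB_expand' _ _ _ x y (lw x y) (lw x y), hxx, hyy, hxw, hyw, hww,
      lB_symm y x, lB_symm (lw x y) x, lB_symm (lw x y) y, hxw, hyw]
    field_simp
    linear_combination (1 + lorentzB x y ^ 2) * hg - (1 + lorentzB x y ^ 2) * hc
  refine ⟨⟨hzz, ?_⟩, hzx, hzy⟩
  exact upper x _ hxx hx0 hzz (by rw [hzx]; linarith)

/-- Key determinant identity for points on the circle-and-line. -/
lemma key_det (x y z : Fin 3 → ℝ) (hxx : lorentzB x x = -1) (hyy : lorentzB y y = 1)
    (c s : ℝ) (hc : c ^ 2 = 1 + s ^ 2)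
    (hzz : lorentzB z z = -1) (hzx : lorentzB z x = -c) (hzy : lorentzB z y = 0) :
    (z 0 * (x 1 * y 2 - x 2 * y 1) - z 1 * (x 0 * y 2 - x 2 * y 0)
      + z 2 * (x 0 * y 1 - x 1 * y 0)) ^ 2 = s ^ 2 - lorentzB x y ^ 2 := by
  have h := det_sq x y z
  rw [hxx, hyy, hzz, lB_symm y z, hzy, lB_symm x z, hzx] at h
  rw [h]; linear_combination hc

lemma uniq (x y z z' : Fin 3 → ℝ) (hxx : lorentzB x x = -1) (hx0 : 0 < x 0)
    (hyy : lorentzB y y = 1) (c s : ℝ) (hc : c ^ 2 = 1 + s ^ 2)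
    (hb : lorentzB x y ^ 2 = s ^ 2)
    (hzz : lorentzB z z = -1) (hzx : lorentzB z x = -c) (hzy : lorentzB z y = 0)
    (hzz' : lorentzB z' z' = -1) (hzx' : lorentzB z' x = -c) (hzy' : lorentzB z' y = 0) :
    z = z' := by
  have ht : (z 0 * (x 1 * y 2 - x 2 * y 1) - z 1 * (x 0 * y 2 - x 2 * y 0)
      + z 2 * (x 0 * y 1 - x 1 * y 0)) = 0 := by
    have h := key_det x y z hxx hyy c s hc hzz hzx hzy
    rw [hb] at h
    have h0 : (z 0 * (x 1 * y 2 - x 2 * y 1) - z 1 * (x 0 * y 2 - x 2 * y 0)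
        + z 2 * (x 0 * y 1 - x 1 * y 0)) ^ 2 = 0 := by linarith
    exact pow_eq_zero_iff (two_ne_zero) |>.mp h0
  have ht' : (z' 0 * (x 1 * y 2 - x 2 * y 1) - z' 1 * (x 0 * y 2 - x 2 * y 0)
      + z' 2 * (x 0 * y 1 - x 1 * y 0)) = 0 := by
    have h := key_det x y z' hxx hyy c s hc hzz' hzx' hzy'
    rw [hb] at h
    have h0 : (z' 0 * (x 1 * y 2 - x 2 * y 1) - z' 1 * (x 0 * y 2 - x 2 * y 0)
        + z' 2 * (x 0 * y 1 - x 1 * y 0)) ^ 2 = 0 := by linarith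
    exact pow_eq_zero_iff (two_ne_zero) |>.mp h0
  have hdx : lorentzB (fun i => z i - z' i) x = 0 := by
    rw [lB_sub, hzx, hzx']; ring
  have hdy : lorentzB (fun i => z i - z' i) y = 0 := by
    rw [lB_sub, hzy, hzy']; ring
  have htd : ((fun i => z i - z' i) 0 * (x 1 * y 2 - x 2 * y 1)
      - (fun i => z i - z' i) 1 * (x 0 * y 2 - x 2 * y 0)
      + (fun i => z i - z' i) 2 * (x 0 * y 1 - x 1 * y 0)) = 0 := by
    show ((z 0 - z' 0) * (x 1 * y 2 - x 2 * y 1)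
      - (z 1 - z' 1) * (x 0 * y 2 - x 2 * y 0)
      + (z 2 - z' 2) * (x 0 * y 1 - x 1 * y 0)) = 0
    linear_combination ht - ht'
  have hdd : lorentzB (fun i => z i - z' i) (fun i => z i - z' i) = 0 := by
    have h := det_sq x y (fun i => z i - z' i)
    rw [htd, hxx, hyy, lB_symm y (fun i => z i - z' i), hdy,
      lB_symm x (fun i => z i - z' i), hdx] at h
    have hk : (0:ℝ) < 1 + lorentzB x y ^ 2 := by positivity
    have h2 : (1 + lorentzB x y ^ 2) * lorentzB (fun i => z i - z' i) (fun i => z i - z' i)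
        = 0 := by linear_combination -h
    exact (mul_eq_zero.mp h2).resolve_left (ne_of_gt hk)
  have hdd2 : -((z 0 - z' 0) * (z 0 - z' 0)) + (z 1 - z' 1) * (z 1 - z' 1)
      + (z 2 - z' 2) * (z 2 - z' 2) = 0 := hdd
  have hdx2 : -((z 0 - z' 0) * x 0) + (z 1 - z' 1) * x 1 + (z 2 - z' 2) * x 2 = 0 := hdx
  have hxx2 : -(x 0 * x 0) + x 1 * x 1 + x 2 * x 2 = -1 := hxx
  have heq : (z 0 - z' 0) * x 0 = (z 1 - z' 1) * x 1 + (z 2 - z' 2) * x 2 := by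
    linarith only [hdx2]
  have hzero : (z 0 - z' 0) ^ 2 + ((z 1 - z' 1) * x 2 - (z 2 - z' 2) * x 1) ^ 2 = 0 := by
    linear_combination (x 1 ^ 2 + x 2 ^ 2) * hdd2 + (z 0 - z' 0) ^ 2 * hxx2
      + ((z 0 - z' 0) * x 0 + (z 1 - z' 1) * x 1 + (z 2 - z' 2) * x 2) * heq
  have hd0sq : (z 0 - z' 0) ^ 2 = 0 := by
    linarith only [hzero, sq_nonneg ((z 1 - z' 1) * x 2 - (z 2 - z' 2) * x 1),
      sq_nonneg (z 0 - z' 0)]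
  have hd0 : z 0 - z' 0 = 0 := pow_eq_zero_iff two_ne_zero |>.mp hd0sq
  have h12 : (z 1 - z' 1) ^ 2 + (z 2 - z' 2) ^ 2 = 0 := by
    linear_combination hdd2 + (z 0 - z' 0) * hd0
  have hd1sq : (z 1 - z' 1) ^ 2 = 0 := by
    linarith only [h12, sq_nonneg (z 1 - z' 1), sq_nonneg (z 2 - z' 2)]
  have hd2sq : (z 2 - z' 2) ^ 2 = 0 := by
    linarith only [h12, sq_nonneg (z 1 - z' 1), sq_nonneg (z 2 - z' 2)]
  have hd1 : z 1 - z' 1 = 0 := pow_eq_zero_iff two_ne_zero |>.mp hd1sq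
  have hd2 : z 2 - z' 2 = 0 := pow_eq_zero_iff two_ne_zero |>.mp hd2sq
  funext i
  fin_cases i
  · show z 0 = z' 0; linarith
  · show z 1 = z' 1; linarith
  · show z 2 = z' 2; linarith

theorem line_tangent_to_circle_iff
    (x y : Fin 3 → ℝ) (hx : x ∈ hyperboloid) (hy : y ∈ deSitter)
    (r : ℝ) (hr : 0 < r) :
    (∃! z : Fin 3 → ℝ, z ∈ hyperboloid ∧ lorentzB z x = -Real.cosh r ∧
        lorentzB z y = 0) ↔
      (lorentzB x y) ^ 2 = (Real.sinh r) ^ 2 := by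
  obtain ⟨hxx, hx0⟩ := hx
  have hyy : lorentzB y y = 1 := hy
  set c := Real.cosh r with hcdef
  set s := Real.sinh r with hsdef
  have hc : c ^ 2 = 1 + s ^ 2 := by rw [hcdef, hsdef, Real.cosh_sq]; ring
  have hs : 0 < s := by rw [hsdef]; positivity
  have hc1 : 1 ≤ c := Real.one_le_cosh r
  constructor
  · rintro ⟨z, ⟨⟨hzz, hz0⟩, hzx, hzy⟩, huniq⟩
    by_contra hne
    rcases lt_or_gt_of_ne hne with hlt | hgt
    · -- b² < s² : two distinct solutions, contradiction with uniqueness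
      set g := Real.sqrt (s ^ 2 - lorentzB x y ^ 2) with hgdef
      have hg : g ^ 2 = s ^ 2 - lorentzB x y ^ 2 := Real.sq_sqrt (by linarith)
      have hgpos : 0 < g := Real.sqrt_pos.mpr (by linarith)
      have hg' : (-g) ^ 2 = s ^ 2 - lorentzB x y ^ 2 := by rw [neg_pow]; simp [hg]
      obtain ⟨hm1, hx1, hy1⟩ := zsol_props x y hxx hx0 hyy c s g hc hc1 hg
      obtain ⟨hm2, hx2, hy2⟩ := zsol_props x y hxx hx0 hyy c s (-g) hc hc1 hg'
      have e1 := huniq (zsol x y c g) ⟨hm1, hx1, hy1⟩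
      have e2 := huniq (zsol x y c (-g)) ⟨hm2, hx2, hy2⟩
      have e12 : zsol x y c g = zsol x y c (-g) := by rw [e1, e2]
      have hk : (0:ℝ) < 1 + lorentzB x y ^ 2 := by positivity
      have hxw : lorentzB x (lw x y) = 0 := by rw [lB_symm]; exact lB_wx x y
      have hyw : lorentzB y (lw x y) = 0 := by rw [lB_symm]; exact lB_wy x y
      have hww : lorentzB (lw x y) (lw x y) = lorentzB x y ^ 2 + 1 := by
        rw [lB_ww, hxx, hyy]; ring
      have v1 : lorentzB (zsol x y c g) (lw x y) = g := by
        rw [zsol_eval, hxw, hyw, hww]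
        field_simp
        ring
      have v2 : lorentzB (zsol x y c (-g)) (lw x y) = -g := by
        rw [zsol_eval, hxw, hyw, hww]
        field_simp
        ring
      rw [e12, v2] at v1
      linarith
    · -- b² > s² : no solution at all
      have := key_det x y z hxx hyy c s hc hzz hzx hzy
      nlinarith [sq_nonneg (z 0 * (x 1 * y 2 - x 2 * y 1)
        - z 1 * (x 0 * y 2 - x 2 * y 0) + z 2 * (x 0 * y 1 - x 1 * y 0))]
  · intro hb
    have hg : (0:ℝ) ^ 2 = s ^ 2 - lorentzB x y ^ 2 := by rw [hb]; ring
    obtain ⟨hm, hzx, hzy⟩ := zsol_props x y hxx hx0 hyy c s 0 hc hc1 hg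
    refine ⟨zsol x y c 0, ⟨hm, hzx, hzy⟩, ?_⟩
    rintro z' ⟨⟨hzz', hz0'⟩, hzx', hzy'⟩
    exact uniq x y z' (zsol x y c 0) hxx hx0 hyy c s hc hb hzz' hzx' hzy'
      hm.1 hzx hzy
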